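/- For n = 3 and any a₁, a₂, a₃ ≥ 0, the integral I₃²(a₁,a₂,a₃) = ∫_0^∞ t² ∏_{i=1}^3 aᵢ sinc(aᵢ t) dt = ∫_0^∞ (sin(a₁t) sin(a₂t) sin(a₃t) / t) dt is nonnegative. -/

import Mathlib

open MeasureTheory Real Filter Set intervalIntegral

lemma intInt_of_bound (f : ℝ → ℝ) (hm : Measurable f) (M : ℝ) (hb : ∀ t, |f t| ≤ M)
    (a b : ℝ) : IntervalIntegrable f volume a b := by
  rw [intervalIntegrable_iff]
  apply Measure.integrableOn_of_bounded (M := M) measure_Ioc_lt_top.ne hm.aestronglyMeasurable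
  filter_upwards with t using hb t

lemma sin_div_bound (c t : ℝ) : |Real.sin (c * t) / t| ≤ |c| := by
  rcases eq_or_ne t 0 with rfl | ht
  · simp
  · rw [abs_div, div_le_iff₀ (abs_pos.2 ht)]
    calc |Real.sin (c * t)| ≤ |c * t| := Real.abs_sin_le_abs
      _ = |c| * |t| := abs_mul c t

lemma intInt_sin_div (c a b : ℝ) :
    IntervalIntegrable (fun t => Real.sin (c * t) / t) volume a b :=
  intInt_of_bound _ ((Real.measurable_sin.comp (measurable_const_mul c)).div measurable_id)
    |c| (sin_div_bound c) a b

lemma intInt_g (a b : ℝ) : IntervalIntegrable (fun t => Real.sin t / t) volume a b := by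
  simpa using intInt_sin_div 1 a b

lemma exists_dirichlet :
    ∃ D : ℝ, Tendsto (fun T => ∫ t in (0:ℝ)..T, Real.sin t / t) atTop (nhds D) := by
  have hw : IntegrableOn (fun t : ℝ => -(t^2)⁻¹ * -Real.cos t) (Ioi π) := by
    apply Integrable.mono' (g := fun t : ℝ => t ^ (-2 : ℝ))
      (integrableOn_Ioi_rpow_of_lt (by norm_num) pi_pos)
    · exact (((measurable_id.pow_const 2).inv.neg.mul
        Real.measurable_cos.neg).aestronglyMeasurable)
    · filter_upwards [ae_restrict_mem measurableSet_Ioi] with t ht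
      have ht0 : (0:ℝ) < t := lt_trans pi_pos ht
      have hr : t ^ (-2:ℝ) = (t^2)⁻¹ := by
        rw [Real.rpow_neg ht0.le, ← Real.rpow_natCast t 2]; norm_num
      rw [hr, Real.norm_eq_abs, abs_mul, abs_neg, abs_neg, abs_inv, abs_of_nonneg (sq_nonneg t)]
      calc (t^2)⁻¹ * |Real.cos t| ≤ (t^2)⁻¹ * 1 :=
            mul_le_mul_of_nonneg_left (Real.abs_cos_le_one t) (by positivity)
        _ = (t^2)⁻¹ := mul_one _
  have htail : Tendsto (fun T => ∫ t in π..T, -(t^2)⁻¹ * -Real.cos t) atTop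
      (nhds (∫ t in Ioi π, -(t^2)⁻¹ * -Real.cos t)) :=
    intervalIntegral_tendsto_integral_Ioi π hw tendsto_id
  have hparts : ∀ T : ℝ, π ≤ T →
      ∫ t in π..T, Real.sin t / t =
        T⁻¹ * (-Real.cos T) - π⁻¹ * (-Real.cos π) - ∫ t in π..T, -(t^2)⁻¹ * -Real.cos t := by
    intro T hT
    have h0 : ∀ x ∈ uIcc π T, x ≠ 0 := by
      intro x hx
      rw [uIcc_of_le hT] at hx
      exact (lt_of_lt_of_le pi_pos hx.1).ne'
    have := intervalIntegral.integral_mul_deriv_eq_deriv_mul (a := π) (b := T)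
      (u := fun x => x⁻¹) (u' := fun x => -(x^2)⁻¹)
      (v := fun x => -Real.cos x) (v' := fun x => Real.sin x)
      (fun x hx => hasDerivAt_inv (h0 x hx))
      (fun x hx => (Real.hasDerivAt_cos x).neg.congr_deriv (neg_neg _))
      (by
        apply ContinuousOn.intervalIntegrable
        exact (ContinuousOn.inv₀ (continuousOn_pow 2) (fun x hx => pow_ne_zero 2 (h0 x hx))).neg)
      (Real.continuous_sin.intervalIntegrable π T)
    rw [← this]
    apply integral_congr
    intro x hx
    have := h0 x hx
    field_simp
  have hcosT : Tendsto (fun T : ℝ => T⁻¹ * (-Real.cos T)) atTop (nhds 0) := by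
    have habs : Tendsto (fun T : ℝ => |T⁻¹|) atTop (nhds 0) := by
      simpa using (tendsto_inv_atTop_zero (𝕜 := ℝ)).abs
    apply squeeze_zero_norm (fun T => ?_) habs
    rw [Real.norm_eq_abs, abs_mul, abs_neg]
    calc |T⁻¹| * |Real.cos T| ≤ |T⁻¹| * 1 :=
          mul_le_mul_of_nonneg_left (Real.abs_cos_le_one T) (abs_nonneg _)
      _ = |T⁻¹| := mul_one _
  refine ⟨(∫ t in (0:ℝ)..π, Real.sin t / t) +
    (0 - π⁻¹ * (-Real.cos π) - ∫ t in Ioi π, -(t^2)⁻¹ * -Real.cos t), ?_⟩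
  have h1 : Tendsto (fun T => ∫ t in π..T, Real.sin t / t) atTop
      (nhds (0 - π⁻¹ * (-Real.cos π) - ∫ t in Ioi π, -(t^2)⁻¹ * -Real.cos t)) := by
    apply Tendsto.congr' (((eventually_ge_atTop π).mono fun T hT => (hparts T hT).symm))
    exact ((hcosT.sub_const _).sub htail)
  have h2 : (fun T => ∫ t in (0:ℝ)..T, Real.sin t / t)
      = fun T => (∫ t in (0:ℝ)..π, Real.sin t / t) + ∫ t in π..T, Real.sin t / t := by
    funext T
    exact (integral_add_adjacent_intervals (intInt_g 0 π) (intInt_g π T)).symm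
  rw [h2]
  exact tendsto_const_nhds.add h1

lemma dirichlet_nonneg (D : ℝ)
    (hD : Tendsto (fun T => ∫ t in (0:ℝ)..T, Real.sin t / t) atTop (nhds D)) : 0 ≤ D := by
  have hterm : ∀ k : ℕ, 0 ≤ ∫ t in (2*π*k : ℝ)..(2*π*(k+1)), Real.sin t / t := by
    intro k
    have hsplit : ∫ t in (2*π*k : ℝ)..(2*π*(k+1)), Real.sin t / t
        = (∫ t in (2*π*k : ℝ)..(2*π*k + π), Real.sin t / t)
          + ∫ t in (2*π*k + π : ℝ)..(2*π*(k+1)), Real.sin t / t :=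
      (integral_add_adjacent_intervals (intInt_g _ _) (intInt_g _ _)).symm
    have hshift : (∫ t in (2*π*k + π : ℝ)..(2*π*(k+1)), Real.sin t / t)
        = ∫ t in (2*π*k : ℝ)..(2*π*k + π), Real.sin (t + π) / (t + π) := by
      rw [intervalIntegral.integral_comp_add_right (fun t => Real.sin t / t) π]
      congr 1 <;> ring
    have hInt2 : IntervalIntegrable (fun t => Real.sin (t + π) / (t + π)) volume
        (2*π*k) (2*π*k + π) := by
      apply intInt_of_bound _ ((Real.measurable_sin.comp (measurable_add_const π)).div
        (measurable_add_const π)) 1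
      intro t
      simpa using sin_div_bound 1 (t + π)
    rw [hsplit, hshift, ← intervalIntegral.integral_add (intInt_g _ _) hInt2]
    have hk0 : (0:ℝ) ≤ 2*π*k := by positivity
    apply intervalIntegral.integral_nonneg (by linarith [pi_pos])
    intro u hu
    have hs : 0 ≤ Real.sin u := by
      have he : Real.sin u = Real.sin (u - 2*π*k) := by
        have := Real.sin_add_nat_mul_two_pi (u - 2*π*k) k
        rw [show u - 2*π*k + k * (2*π) = u by ring] at this
        exact this
      rw [he]
      exact Real.sin_nonneg_of_nonneg_of_le_pi (by linarith [hu.1]) (by linarith [hu.2])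
    rw [Real.sin_add_pi]
    rcases eq_or_lt_of_le (hk0.trans hu.1) with h0 | h0
    · simp [← h0]
    · have hle : Real.sin u / (u + π) ≤ Real.sin u / u := by
        gcongr
        linarith [pi_pos]
      rw [neg_div]
      linarith
  have hsum : ∀ n : ℕ, 0 ≤ ∫ t in (0:ℝ)..(2*π*n), Real.sin t / t := by
    intro n
    have h := intervalIntegral.sum_integral_adjacent_intervals
      (a := fun k : ℕ => 2*π*k) (n := n) (μ := volume) (fun k _ => intInt_g _ _)
    simp only [Nat.cast_zero, mul_zero] at h
    rw [← h]
    apply Finset.sum_nonneg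
    intro k _
    have := hterm k
    push_cast at this ⊢
    exact this
  have hseq : Tendsto (fun n : ℕ => ∫ t in (0:ℝ)..(2*π*n), Real.sin t / t) atTop (nhds D) :=
    hD.comp (Tendsto.const_mul_atTop (by positivity) tendsto_natCast_atTop_atTop)
  exact ge_of_tendsto' hseq hsum

lemma tendsto_sin_div (D : ℝ)
    (hD : Tendsto (fun T => ∫ t in (0:ℝ)..T, Real.sin t / t) atTop (nhds D)) (c : ℝ) :
    Tendsto (fun T => ∫ t in (0:ℝ)..T, Real.sin (c * t) / t) atTop
      (nhds (Real.sign c * D)) := by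
  have key : ∀ c : ℝ, 0 < c → Tendsto (fun T => ∫ t in (0:ℝ)..T, Real.sin (c * t) / t)
      atTop (nhds D) := by
    intro c hc
    have heq : ∀ T : ℝ, ∫ t in (0:ℝ)..T, Real.sin (c * t) / t
        = ∫ u in (0:ℝ)..(c * T), Real.sin u / u := by
      intro T
      have h1 : ∀ t : ℝ, Real.sin (c * t) / t = c * (Real.sin (c * t) / (c * t)) := by
        intro t
        rcases eq_or_ne t 0 with rfl | ht
        · simp
        · field_simp
      calc ∫ t in (0:ℝ)..T, Real.sin (c * t) / t
          = ∫ t in (0:ℝ)..T, c * (Real.sin (c * t) / (c * t)) := by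
            exact intervalIntegral.integral_congr (fun t _ => h1 t)
        _ = c * ∫ t in (0:ℝ)..T, Real.sin (c * t) / (c * t) :=
            intervalIntegral.integral_const_mul c _
        _ = ∫ u in (c * 0)..(c * T), Real.sin u / u :=
            intervalIntegral.mul_integral_comp_mul_left (f := fun u => Real.sin u / u) c
        _ = ∫ u in (0:ℝ)..(c * T), Real.sin u / u := by rw [mul_zero]
    simp only [heq]
    exact hD.comp (Tendsto.const_mul_atTop hc tendsto_id)
  rcases lt_trichotomy c 0 with hc | hc | hc
  · have h := key (-c) (by linarith)
    rw [Real.sign_of_neg hc, neg_one_mul]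
    have heq : ∀ T : ℝ, ∫ t in (0:ℝ)..T, Real.sin (c * t) / t
        = -∫ t in (0:ℝ)..T, Real.sin (-c * t) / t := by
      intro T
      rw [← intervalIntegral.integral_neg]
      apply intervalIntegral.integral_congr
      intro t _
      show Real.sin (c * t) / t = -(Real.sin (-c * t) / t)
      rw [show -c * t = -(c * t) by ring, Real.sin_neg]
      ring
    simp only [heq]
    exact h.neg
  · subst hc
    simp only [Real.sign_zero, zero_mul, zero_mul, Real.sin_zero, zero_div,
      intervalIntegral.integral_zero]
    exact tendsto_const_nhds
  · rw [Real.sign_of_pos hc, one_mul]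
    exact key c hc

lemma sign_sum_nonneg (a₁ a₂ a₃ : ℝ) (h₁ : 0 ≤ a₁) (h₂ : 0 ≤ a₂) (h₃ : 0 ≤ a₃) :
    0 ≤ Real.sign (a₁ + a₂ - a₃) + Real.sign (a₁ - a₂ + a₃) + Real.sign (-a₁ + a₂ + a₃)
      - Real.sign (a₁ + a₂ + a₃) := by
  have hs : ∀ x : ℝ, 0 ≤ x → 0 ≤ Real.sign x := by
    intro x hx
    rcases eq_or_lt_of_le hx with h | h
    · rw [← h, Real.sign_zero]
    · rw [Real.sign_of_pos h]
      norm_num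
  rcases lt_or_ge (a₁ + a₂ - a₃) 0 with u₁ | u₁
  · rw [Real.sign_of_neg u₁, Real.sign_of_pos (by linarith : 0 < a₁ - a₂ + a₃),
      Real.sign_of_pos (by linarith : 0 < -a₁ + a₂ + a₃),
      Real.sign_of_pos (by linarith : 0 < a₁ + a₂ + a₃)]
    norm_num
  rcases lt_or_ge (a₁ - a₂ + a₃) 0 with u₂ | u₂
  · rw [Real.sign_of_neg u₂, Real.sign_of_pos (by linarith : 0 < a₁ + a₂ - a₃),
      Real.sign_of_pos (by linarith : 0 < -a₁ + a₂ + a₃),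
      Real.sign_of_pos (by linarith : 0 < a₁ + a₂ + a₃)]
    norm_num
  rcases lt_or_ge (-a₁ + a₂ + a₃) 0 with u₃ | u₃
  · rw [Real.sign_of_neg u₃, Real.sign_of_pos (by linarith : 0 < a₁ + a₂ - a₃),
      Real.sign_of_pos (by linarith : 0 < a₁ - a₂ + a₃),
      Real.sign_of_pos (by linarith : 0 < a₁ + a₂ + a₃)]
    norm_num
  rcases eq_or_lt_of_le (by linarith : (0:ℝ) ≤ a₁ + a₂ + a₃) with h4 | h4
  · have e1 : a₁ = 0 := by linarith
    have e2 : a₂ = 0 := by linarith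
    have e3 : a₃ = 0 := by linarith
    simp [e1, e2, e3]
  · rw [Real.sign_of_pos h4]
    have hb : 0 < a₁ + a₂ - a₃ ∨ 0 < a₁ - a₂ + a₃ ∨ 0 < -a₁ + a₂ + a₃ := by
      by_contra h
      push_neg at h
      obtain ⟨w₁, w₂, w₃⟩ := h
      linarith
    rcases hb with h | h | h
    · have t2 := hs _ u₂
      have t3 := hs _ u₃
      rw [Real.sign_of_pos h]
      linarith
    · have t1 := hs _ u₁
      have t3 := hs _ u₃
      rw [Real.sign_of_pos h]
      linarith
    · have t1 := hs _ u₁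
      have t2 := hs _ u₂
      rw [Real.sign_of_pos h]
      linarith


/-- For `a₁, a₂, a₃ ≥ 0`, the improper integral
`∫_0^∞ sin(a₁t) sin(a₂t) sin(a₃t) / t dt` converges and is nonnegative. -/
theorem I3_nonneg (a₁ a₂ a₃ : ℝ) (h₁ : 0 ≤ a₁) (h₂ : 0 ≤ a₂) (h₃ : 0 ≤ a₃) :
    ∃ L : ℝ, Tendsto (fun T : ℝ =>
        ∫ t in (0:ℝ)..T, Real.sin (a₁ * t) * Real.sin (a₂ * t) * Real.sin (a₃ * t) / t)
      atTop (nhds L) ∧ 0 ≤ L := by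
  obtain ⟨D, hD⟩ := exists_dirichlet
  have hD0 := dirichlet_nonneg D hD
  set b₁ := a₁ + a₂ - a₃ with hb₁
  set b₂ := a₁ - a₂ + a₃ with hb₂
  set b₃ := -a₁ + a₂ + a₃ with hb₃
  set b₄ := a₁ + a₂ + a₃ with hb₄
  have key : ∀ A B C : ℝ, Real.sin A * Real.sin B * Real.sin C
      = (Real.sin (A + B - C) + Real.sin (A - B + C) + Real.sin (-A + B + C)
        - Real.sin (A + B + C)) / 4 := by
    intro A B C
    simp only [Real.sin_add, Real.sin_sub, Real.cos_add, Real.cos_sub, Real.sin_neg,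
      Real.cos_neg]
    ring
  have hfun : (fun t => Real.sin (a₁ * t) * Real.sin (a₂ * t) * Real.sin (a₃ * t) / t)
      = fun t => (Real.sin (b₁ * t) / t + Real.sin (b₂ * t) / t + Real.sin (b₃ * t) / t
        - Real.sin (b₄ * t) / t) / 4 := by
    funext t
    rw [key (a₁ * t) (a₂ * t) (a₃ * t),
      show a₁ * t + a₂ * t - a₃ * t = b₁ * t by rw [hb₁]; ring,
      show a₁ * t - a₂ * t + a₃ * t = b₂ * t by rw [hb₂]; ring,
      show -(a₁ * t) + a₂ * t + a₃ * t = b₃ * t by rw [hb₃]; ring,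
      show a₁ * t + a₂ * t + a₃ * t = b₄ * t by rw [hb₄]; ring]
    ring
  refine ⟨(Real.sign b₁ * D + Real.sign b₂ * D + Real.sign b₃ * D - Real.sign b₄ * D) / 4,
    ?_, ?_⟩
  · simp only [hfun]
    have heq : ∀ T : ℝ, (∫ t in (0:ℝ)..T, (Real.sin (b₁ * t) / t + Real.sin (b₂ * t) / t
          + Real.sin (b₃ * t) / t - Real.sin (b₄ * t) / t) / 4)
        = ((∫ t in (0:ℝ)..T, Real.sin (b₁ * t) / t) + (∫ t in (0:ℝ)..T, Real.sin (b₂ * t) / t)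
          + (∫ t in (0:ℝ)..T, Real.sin (b₃ * t) / t)
          - ∫ t in (0:ℝ)..T, Real.sin (b₄ * t) / t) / 4 := by
      intro T
      rw [intervalIntegral.integral_div,
        intervalIntegral.integral_sub (((intInt_sin_div b₁ 0 T).add (intInt_sin_div b₂ 0 T)).add
          (intInt_sin_div b₃ 0 T)) (intInt_sin_div b₄ 0 T),
        intervalIntegral.integral_add ((intInt_sin_div b₁ 0 T).add (intInt_sin_div b₂ 0 T))
          (intInt_sin_div b₃ 0 T),
        intervalIntegral.integral_add (intInt_sin_div b₁ 0 T) (intInt_sin_div b₂ 0 T)]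
    simp only [heq]
    exact ((((tendsto_sin_div D hD b₁).add (tendsto_sin_div D hD b₂)).add
      (tendsto_sin_div D hD b₃)).sub (tendsto_sin_div D hD b₄)).div_const 4
  · have hsgn := sign_sum_nonneg a₁ a₂ a₃ h₁ h₂ h₃
    have hmul : 0 ≤ (Real.sign b₁ + Real.sign b₂ + Real.sign b₃ - Real.sign b₄) * D :=
      mul_nonneg hsgn hD0
    have heq : (Real.sign b₁ * D + Real.sign b₂ * D + Real.sign b₃ * D - Real.sign b₄ * D) / 4
        = (Real.sign b₁ + Real.sign b₂ + Real.sign b₃ - Real.sign b₄) * D / 4 := by ring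
    rw [heq]
    exact div_nonneg hmul (by norm_num)
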